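/- Let H, V be real Hilbert spaces with V continuously embedded in H, A* : V → V* bounded linear, symmetric, monotone, and coercive in the sense that ⟨A*w,w⟩ + ‖w‖²_H ≥ ω‖w‖²_V for some ω > 0 and all w ∈ V. Let B : H → H be linear monotone and Φ_λ : H → H monotone with Φ_λ(0) = 0, ℒ : H → H Lipschitz with constant C_ℒ, L : H → H bounded linear with (Lw,w) ≥ c_L‖w‖². Then for h > 0 small enough (explicitly, whenever c_L - h² - C_ℒh² > 0), the operator Ψ : V → V* defined by ⟨Ψφ, w⟩ := (Lφ,w)_H + h⟨B*φ,w⟩ + h²⟨A*φ,w⟩ + h²(Φ_λφ, w)_H + h²(ℒφ, w)_H satisfies ⟨Ψφ - Ψψ, φ - ψ⟩ ≥ ω h² ‖φ - ψ‖²_V for all φ, ψ ∈ V; in particular Ψ is strongly monotone. -/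
import Mathlib


open scoped RealInnerProductSpace

/-- Strong monotonicity of the discrete operator `Ψ`: under the structural assumptions
on `L, B*, A*, Φ_λ, ℒ`, if `c_L - h² - C_ℒ h² > 0` then
`⟨Ψφ - Ψψ, φ - ψ⟩ ≥ ω h² ‖φ - ψ‖²_V` for all `φ, ψ ∈ V`. -/
theorem stmt9 {V H : Type*}
    [NormedAddCommGroup V] [InnerProductSpace ℝ V] [CompleteSpace V]
    [NormedAddCommGroup H] [InnerProductSpace ℝ H] [CompleteSpace H]
    (ι : V →L[ℝ] H) (hι : ∀ w : V, ‖ι w‖ ≤ ‖w‖)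
    (A : V →L[ℝ] (V →L[ℝ] ℝ))
    (hAsym : ∀ w z : V, A w z = A z w)
    (hAmono : ∀ w : V, 0 ≤ A w w)
    (ω : ℝ) (hω : 0 < ω)
    (hAcoer : ∀ w : V, A w w + ‖ι w‖ ^ 2 ≥ ω * ‖w‖ ^ 2)
    (B : V →L[ℝ] (V →L[ℝ] ℝ)) (hBmono : ∀ w : V, 0 ≤ B w w)
    (Φ : H → H) (hΦ0 : Φ 0 = 0)
    (hΦmono : ∀ x y : H, 0 ≤ ⟪Φ x - Φ y, x - y⟫)
    (ℒ : H → H) (CL : ℝ) (hCL : 0 ≤ CL) (hℒ : LipschitzWith (Real.toNNReal CL) ℒ)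
    (L : H →L[ℝ] H) (cL : ℝ) (hcL : 0 < cL)
    (hLcoer : ∀ w : H, ⟪L w, w⟫ ≥ cL * ‖w‖ ^ 2)
    (h : ℝ) (hh : 0 < h) (hsmall : 0 < cL - h ^ 2 - CL * h ^ 2) :
    ∀ φ ψ : V,
      ⟪L (ι φ) - L (ι ψ), ι φ - ι ψ⟫
        + h * B (φ - ψ) (φ - ψ)
        + h ^ 2 * A (φ - ψ) (φ - ψ)
        + h ^ 2 * ⟪Φ (ι φ) - Φ (ι ψ), ι φ - ι ψ⟫
        + h ^ 2 * ⟪ℒ (ι φ) - ℒ (ι ψ), ι φ - ι ψ⟫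
      ≥ ω * h ^ 2 * ‖φ - ψ‖ ^ 2 := by
  intro φ ψ
  set w := φ - ψ with hw
  have he : ι φ - ι ψ = ι w := by simp [hw, map_sub]
  rw [he]
  have hLterm : ⟪L (ι φ) - L (ι ψ), ι w⟫ ≥ cL * ‖ι w‖ ^ 2 := by
    have : L (ι φ) - L (ι ψ) = L (ι w) := by simp [hw, map_sub]
    rw [this]; exact hLcoer _
  have hΦterm : 0 ≤ ⟪Φ (ι φ) - Φ (ι ψ), ι w⟫ := by
    rw [← he]; exact hΦmono _ _
  have hℒterm : ⟪ℒ (ι φ) - ℒ (ι ψ), ι w⟫ ≥ -(CL * ‖ι w‖ ^ 2) := by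
    have h1 : |⟪ℒ (ι φ) - ℒ (ι ψ), ι w⟫| ≤ ‖ℒ (ι φ) - ℒ (ι ψ)‖ * ‖ι w‖ :=
      abs_real_inner_le_norm _ _
    have h2 : ‖ℒ (ι φ) - ℒ (ι ψ)‖ ≤ CL * ‖ι φ - ι ψ‖ := by
      have := hℒ.dist_le_mul (ι φ) (ι ψ)
      rw [dist_eq_norm, dist_eq_norm] at this
      simpa [Real.coe_toNNReal CL hCL] using this
    rw [he] at h2
    have h3 : ‖ℒ (ι φ) - ℒ (ι ψ)‖ * ‖ι w‖ ≤ CL * ‖ι w‖ ^ 2 := by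
      nlinarith [norm_nonneg (ι w), norm_nonneg (ℒ (ι φ) - ℒ (ι ψ))]
    nlinarith [abs_le.mp h1]
  have hA := hAcoer w
  have hB := hBmono w
  have hιw := hι w
  have hn := norm_nonneg (ι w)
  have hn2 := norm_nonneg w
  nlinarith [sq_nonneg h, mul_pos hh hh]
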